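/- Let μ > 1 and θ₁, θ₂ ∈ ℝ, and define ψ̃(z) = (e^{iμθ₁} z₁, e^{(μ/2)θ₁ + iθ₂} z₂) for z = (z₁,z₂) ∈ ℂ × (ℂ∖{0}). Then: (i) ρ̃(ψ̃(z)) = ρ̃(z) for all z ∈ ℂ × (ℂ∖{0}), so ψ̃ maps Ω̃ onto Ω̃; (ii) for every z ∈ Ω̃, log^{|e^{(μ/2)θ₁+iθ₂} z₂|}(e^{iμθ₁} z₁) = log^{|z₂|}(z₁) + iμθ₁; and (iii) for every z ∈ Ω̃, φ̃(ψ̃(z)) = (e^{iθ₁} φ̃₁(z), e^{iθ₂} φ̃₂(z)). -/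

import Mathlib

open MeasureTheory

/-- `log^t(z)`: the branch of the logarithm of `z` whose imaginary part lies in
`[log t², log t² + 2π)`. -/
noncomputable def logT (t : ℝ) (z : ℂ) : ℂ :=
  Complex.log z +
    ((2 * Real.pi * (⌈(Real.log (t ^ 2) - (Complex.log z).im) / (2 * Real.pi)⌉ : ℤ) : ℝ) : ℂ) *
      Complex.I

/-- `ρ̃(z) = |z₁ + e^{i log|z₂|²}|² - 1`. -/
noncomputable def rhoT (z : ℂ × ℂ) : ℝ :=
  ‖z.1 + Complex.exp (Complex.I * (Real.log (‖z.2‖ ^ 2) : ℂ))‖ ^ 2 - 1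

/-- `Ω̃ = {z ∈ ℂ × (ℂ∖{0}) : ρ̃(z) < 0}`. -/
def OmegaT : Set (ℂ × ℂ) := {z | z.2 ≠ 0 ∧ rhoT z < 0}

/-- `φ̃(z) = (exp((log^{|z₂|}(z₁) - log 2)/μ), z₂ exp(½(π + i log^{|z₂|}(z₁))))`. -/
noncomputable def phiT (μ : ℝ) (z : ℂ × ℂ) : ℂ × ℂ :=
  (Complex.exp ((logT (‖z.2‖) z.1 - (Real.log 2 : ℂ)) / (μ : ℂ)),
   z.2 * Complex.exp (((Real.pi : ℂ) + Complex.I * logT (‖z.2‖) z.1) / 2))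

/-- The Reinhardt domain
`D_μ = {w ∈ ℂ² : 0 < |w₁| < 1 and |log |w₂|²| < arccos(|w₁|^μ)}`. -/
def Dset (μ : ℝ) : Set (ℂ × ℂ) :=
  {w | 0 < ‖w.1‖ ∧ ‖w.1‖ < 1 ∧
    |Real.log (‖w.2‖ ^ 2)| < Real.arccos (‖w.1‖ ^ μ)}

lemma logT_rot (t r : ℝ) (ht : 0 < t) (z : ℂ) (hz : z ≠ 0) :
    logT (Real.exp (r / 2) * t) (Complex.exp (Complex.I * r) * z) =
      logT t z + Complex.I * r := by
  have hez : Complex.exp (Complex.I * r) * z ≠ 0 := mul_ne_zero (Complex.exp_ne_zero _) hz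
  obtain ⟨n, hn⟩ := Complex.exp_eq_exp_iff_exists_int.mp
    (show Complex.exp (Complex.log (Complex.exp (Complex.I * r) * z)) =
        Complex.exp (Complex.log z + Complex.I * r) by
      rw [Complex.exp_log hez, Complex.exp_add, Complex.exp_log hz]; ring)
  have him : (Complex.log (Complex.exp (Complex.I * r) * z)).im =
      (Complex.log z).im + r + 2 * Real.pi * n := by
    rw [hn]; simp [Complex.add_im, Complex.mul_im]; ring
  have hlog2 : Real.log ((Real.exp (r / 2) * t) ^ 2) = r + Real.log (t ^ 2) := by
    rw [mul_pow, Real.log_mul (by positivity) (by positivity), ← Real.exp_nat_mul]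
    rw [Real.log_exp]
    ring_nf
  have hpi : (0:ℝ) < Real.pi := Real.pi_pos
  have hceil : ⌈(Real.log ((Real.exp (r / 2) * t) ^ 2) -
        (Complex.log (Complex.exp (Complex.I * r) * z)).im) / (2 * Real.pi)⌉ =
      ⌈(Real.log (t ^ 2) - (Complex.log z).im) / (2 * Real.pi)⌉ - n := by
    rw [hlog2, him]
    rw [show (r + Real.log (t ^ 2) - ((Complex.log z).im + r + 2 * Real.pi * n)) / (2 * Real.pi)
        = (Real.log (t ^ 2) - (Complex.log z).im) / (2 * Real.pi) - n by
      field_simp; ring]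
    exact Int.ceil_sub_intCast _ n
  unfold logT
  rw [hceil, hn]
  push_cast
  ring

theorem isometry_properties (μ θ₁ θ₂ : ℝ) (hμ : 1 < μ)
    (ψ : ℂ × ℂ → ℂ × ℂ)
    (hψ : ψ = fun z => (Complex.exp (Complex.I * (μ : ℂ) * (θ₁ : ℂ)) * z.1,
      Complex.exp (((μ : ℂ) / 2) * (θ₁ : ℂ) + Complex.I * (θ₂ : ℂ)) * z.2)) :
    (∀ z : ℂ × ℂ, z.2 ≠ 0 → rhoT (ψ z) = rhoT z) ∧
    (ψ '' OmegaT = OmegaT) ∧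
    (∀ z ∈ OmegaT, logT (‖(ψ z).2‖) (ψ z).1 =
      logT (‖z.2‖) z.1 + Complex.I * (μ : ℂ) * (θ₁ : ℂ)) ∧
    (∀ z ∈ OmegaT, phiT μ (ψ z) =
      (Complex.exp (Complex.I * (θ₁ : ℂ)) * (phiT μ z).1,
       Complex.exp (Complex.I * (θ₂ : ℂ)) * (phiT μ z).2)) := by
  have harg : ((μ:ℂ)/2) * (θ₁:ℂ) + Complex.I * (θ₂:ℂ)
      = ((μ * θ₁ / 2 : ℝ) : ℂ) + (θ₂ : ℝ) * Complex.I := by push_cast; ring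
  have habs : ∀ z : ℂ × ℂ, ‖(ψ z).2‖
      = Real.exp (μ * θ₁ / 2) * ‖z.2‖ := by
    intro z
    simp [hψ, harg, Complex.norm_exp]
  have hψ1 : ∀ z : ℂ × ℂ, (ψ z).1 = Complex.exp (Complex.I * ((μ * θ₁ : ℝ) : ℂ)) * z.1 := by
    intro z; rw [hψ]; push_cast; ring_nf
  have h1 : ∀ z : ℂ × ℂ, z.2 ≠ 0 → rhoT (ψ z) = rhoT z := by
    intro z hz2
    have hlog : Real.log (‖(ψ z).2‖ ^ 2)
        = μ * θ₁ + Real.log (‖z.2‖ ^ 2) := by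
      rw [habs z, mul_pow, Real.log_mul (by positivity)
        (pow_ne_zero _ (by simpa using hz2)), ← Real.exp_nat_mul, Real.log_exp]
      ring_nf
    unfold rhoT
    rw [hlog, hψ1 z,
      show Complex.I * ((μ * θ₁ + Real.log (‖z.2‖ ^ 2) : ℝ) : ℂ)
        = Complex.I * ((μ * θ₁ : ℝ) : ℂ) + Complex.I * ((Real.log (‖z.2‖ ^ 2) : ℝ) : ℂ)
        by push_cast; ring,
      Complex.exp_add, ← mul_add, norm_mul]
    simp [Complex.norm_exp]
  have hΩ : ∀ z ∈ OmegaT, ψ z ∈ OmegaT := by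
    intro z hz
    refine ⟨by simp [hψ, hz.1, Complex.exp_ne_zero], by rw [h1 z hz.1]; exact hz.2⟩
  have h2 : ψ '' OmegaT = OmegaT := by
    apply Set.Subset.antisymm
    · rintro _ ⟨z, hz, rfl⟩; exact hΩ z hz
    · intro w hw
      set zinv : ℂ × ℂ := (Complex.exp (-(Complex.I * (μ:ℂ) * (θ₁:ℂ))) * w.1,
        Complex.exp (-(((μ:ℂ)/2) * (θ₁:ℂ) + Complex.I * (θ₂:ℂ))) * w.2) with hzinv
    
      have hz2 : zinv.2 ≠ 0 := mul_ne_zero (Complex.exp_ne_zero _) hw.1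
      have hψz : ψ zinv = w := by
        rw [hψ, hzinv]
        simp only
        rw [Prod.ext_iff]
        refine ⟨?_, ?_⟩ <;>
        · dsimp only
          rw [← mul_assoc, ← Complex.exp_add, add_neg_cancel, Complex.exp_zero, one_mul]
      refine ⟨zinv, ⟨hz2, ?_⟩, hψz⟩
      have := h1 zinv hz2
      rw [hψz] at this
      rw [← this]; exact hw.2
  have hz1 : ∀ z ∈ OmegaT, z.1 ≠ 0 := by
    intro z hz h0
    have h := hz.2
    unfold rhoT at h
    rw [h0] at h
    simp [Complex.norm_exp] at h
  have h3 : ∀ z ∈ OmegaT, logT (‖(ψ z).2‖) (ψ z).1 =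
      logT (‖z.2‖) z.1 + Complex.I * (μ : ℂ) * (θ₁ : ℂ) := by
    intro z hz
    rw [habs z, hψ1 z,
      show Real.exp (μ * θ₁ / 2) = Real.exp ((μ * θ₁) / 2) by ring_nf,
      logT_rot (‖z.2‖) (μ * θ₁) (norm_pos_iff.mpr hz.1) z.1 (hz1 z hz)]
    push_cast; ring
  refine ⟨h1, h2, h3, ?_⟩
  intro z hz
  have hL := h3 z hz
  have hμ0 : (μ:ℂ) ≠ 0 := by
    norm_cast
    linarith
  set L := logT (‖z.2‖) z.1 with hLdef
  unfold phiT
  rw [hL]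
  simp only [Prod.mk.injEq]
  constructor
  · rw [← Complex.exp_add]
    congr 1
    field_simp
    ring
  · rw [hψ]
    simp only
    have key : Complex.exp (((μ:ℂ)/2) * (θ₁:ℂ) + Complex.I * (θ₂:ℂ)) *
        Complex.exp (((Real.pi:ℂ) + Complex.I * (L + Complex.I * (μ:ℂ) * (θ₁:ℂ))) / 2)
        = Complex.exp (Complex.I * (θ₂:ℂ)) *
          Complex.exp (((Real.pi:ℂ) + Complex.I * L) / 2) := by
      rw [← Complex.exp_add, ← Complex.exp_add]
      congr 1
      linear_combination ((μ:ℂ) * (θ₁:ℂ) / 2) * Complex.I_mul_I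
    linear_combination z.2 * key
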